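/- Let α be a real number with 0 < α < 1. Then there exists a constant C(α) > 0, depending only on α, such that for every positive integer n, n/φ(n) ≤ C(α) · ∏_{p prime, p | n, p ≤ (ln n)^α} (1 + 1/p). -/

import Mathlib

open Finset

private lemma telescope_Icc (M : ℕ) :
    ∑ k ∈ Finset.Icc 2 (M + 2), (1/((k:ℝ)-1) - 1/k) = 1 - 1/(M+2) := by
  induction M with
  | zero => norm_num
  | succ M ih =>
    rw [show M+1+2 = (M+2)+1 from rfl, Finset.sum_Icc_succ_top (by omega), ih]
    have h1 : ((M:ℝ)+2) ≠ 0 := by positivity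
    have h2 : ((M:ℝ)+2+1-1) ≠ 0 := by push_cast; norm_num; positivity
    push_cast
    field_simp
    ring

private lemma sum_sub_le_one (S : Finset ℕ) (hS : ∀ k ∈ S, 2 ≤ k) :
    ∑ k ∈ S, (1/((k:ℝ)-1) - 1/k) ≤ 1 := by
  classical
  have hsub : S ⊆ Finset.Icc 2 (S.sup id + 2) := fun k hk =>
    Finset.mem_Icc.2 ⟨hS k hk, le_trans (Finset.le_sup (f := id) hk) (by omega)⟩
  have hnn : ∀ k ∈ Finset.Icc 2 (S.sup id + 2), k ∉ S → 0 ≤ 1/((k:ℝ)-1) - 1/k := by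
    intro k hk _
    have h2 : 2 ≤ k := (Finset.mem_Icc.1 hk).1
    have h2' : (2:ℝ) ≤ k := by exact_mod_cast h2
    have hk1 : (0:ℝ) < (k:ℝ) - 1 := by linarith
    have : 1/(k:ℝ) ≤ 1/((k:ℝ)-1) := by
      apply one_div_le_one_div_of_le hk1; linarith
    linarith
  have step : ∑ k ∈ S, (1/((k:ℝ)-1) - 1/k)
      ≤ ∑ k ∈ Finset.Icc 2 (S.sup id + 2), (1/((k:ℝ)-1) - 1/k) :=
    Finset.sum_le_sum_of_subset_of_nonneg hsub hnn
  refine le_trans step ?_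
  rw [telescope_Icc]
  have : (0:ℝ) ≤ 1/(((S.sup id : ℕ) : ℝ)+2) := by positivity
  linarith


private lemma sum_inv_large_le (α : ℝ) (hα0 : 0 < α) (n : ℕ) (hn : 0 < n)
    (hbig : (2/α + 3) * Real.log 2 ≤ Real.log (Real.log n)) :
    ∑ p ∈ n.primeFactors.filter (fun p : ℕ => ¬ ((p : ℝ) ≤ (Real.log n) ^ α)), (1/(p:ℝ))
      ≤ 16/α := by
  classical
  set L : ℝ := (Real.log n) ^ α with hLdef
  set S := n.primeFactors.filter (fun p : ℕ => ¬ ((p : ℝ) ≤ L)) with hSdef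
  set m := Nat.log 2 (⌊L⌋₊ + 1) with hmdef
  set T := Nat.log 2 n with hTdef
  set J := Nat.log 2 T with hJdef
  have hlog2pos : (0:ℝ) < Real.log 2 := Real.log_pos (by norm_num)
  set x : ℝ := Real.log (Real.log n) / Real.log 2 with hxdef
  have hx : 2/α + 3 ≤ x := (le_div_iff₀ hlog2pos).2 hbig
  have hα2 : (0:ℝ) < 2/α := by positivity
  have hx3 : (3:ℝ) ≤ x := by linarith
  have hxpos : (0:ℝ) < x := by linarith
  -- log n > 1
  have hlogn1 : 1 < Real.log n := by
    by_contra h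
    push_neg at h
    have h0 : (0:ℝ) ≤ Real.log n := Real.log_nonneg (by exact_mod_cast hn)
    have h1 : Real.log (Real.log n) ≤ 0 := Real.log_nonpos h0 h
    nlinarith [mul_pos (by positivity : (0:ℝ) < 2/α + 3) hlog2pos]
  have hlognpos : (0:ℝ) < Real.log n := by linarith
  have hL1 : (1:ℝ) ≤ L := Real.one_le_rpow hlogn1.le hα0.le
  have hL0 : (0:ℝ) ≤ L := by linarith
  have hn2 : 2 ≤ n := by
    by_contra h
    have : n = 1 := by omega
    rw [this] at hlogn1
    simp at hlogn1
    linarith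
  have hT1 : 1 ≤ T := Nat.log_pos one_lt_two hn2
  -- m lower bound
  have hm_real : α * Real.log (Real.log n) < ((m:ℝ) + 1) * Real.log 2 := by
    have h1 : (⌊L⌋₊ + 1 : ℕ) < 2 ^ (m + 1) := Nat.lt_pow_succ_log_self one_lt_two _
    have h2 : L < ((⌊L⌋₊ + 1 : ℕ) : ℝ) := by
      push_cast; exact Nat.lt_floor_add_one L
    have h3 : L < (2:ℝ) ^ (m+1) := by
      refine lt_of_lt_of_le h2 ?_
      exact_mod_cast h1.le
    have h4 : Real.log L < Real.log ((2:ℝ)^(m+1)) := Real.log_lt_log (by linarith) h3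
    rw [Real.log_rpow hlognpos, Real.log_pow] at h4
    push_cast at h4
    linarith
  have hax : 2 ≤ α * x := by
    have h := mul_le_mul_of_nonneg_left hx hα0.le
    have h2 : α * (2/α+3) = 2 + 3*α := by field_simp
    nlinarith
  have hm_low : α * x / 2 ≤ (m:ℝ) := by
    have h1 : α * x * Real.log 2 = α * Real.log (Real.log n) := by
      rw [hxdef]; field_simp
    have h2 : α * x < (m:ℝ) + 1 := by
      have h3 := hm_real
      rw [← h1] at h3
      exact lt_of_mul_lt_mul_right h3 hlog2pos.le
    linarith
  have hmr : (0:ℝ) < (m:ℝ) := by linarith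
  have hm1 : 1 ≤ m := by exact_mod_cast hmr
  -- T, J bounds
  have hTreal : (T:ℝ) * Real.log 2 ≤ Real.log n := by
    have h1 : (2:ℕ)^T ≤ n := Nat.pow_log_le_self 2 hn.ne'
    have h2 : ((2:ℝ))^T ≤ (n:ℝ) := by exact_mod_cast h1
    have h3 := Real.log_le_log (by positivity) h2
    rwa [Real.log_pow] at h3
  have hTpos : (0:ℝ) < (T:ℝ) := by exact_mod_cast hT1
  have hJreal : (J:ℝ) ≤ x + 1 := by
    have h1 : (2:ℕ)^J ≤ T := Nat.pow_log_le_self 2 (by omega)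
    have h2 : (J:ℝ) * Real.log 2 ≤ Real.log T := by
      have h2' : ((2:ℝ))^J ≤ (T:ℝ) := by exact_mod_cast h1
      have := Real.log_le_log (by positivity) h2'
      rwa [Real.log_pow] at this
    have h3 : (T:ℝ) ≤ Real.log n / Real.log 2 := by
      rw [le_div_iff₀ hlog2pos]; exact hTreal
    have h4 : Real.log T ≤ Real.log (Real.log n / Real.log 2) :=
      Real.log_le_log hTpos h3
    have h5 : Real.log (Real.log n / Real.log 2) =
        Real.log (Real.log n) - Real.log (Real.log 2) :=
      Real.log_div (by linarith) (by linarith)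
    have h6 : -Real.log 2 ≤ Real.log (Real.log 2) := by
      have hh : (2:ℝ)⁻¹ ≤ Real.log 2 := by
        have := Real.log_two_gt_d9; norm_num; linarith
      have h7 := Real.log_le_log (by norm_num) hh
      rwa [Real.log_inv] at h7
    have h8 : (J:ℝ) * Real.log 2 ≤ Real.log (Real.log n) + Real.log 2 := by
      rw [h5] at h4; linarith
    rw [hxdef]
    rw [div_add' _ _ _ hlog2pos.ne'] 
    rw [le_div_iff₀ hlog2pos]
    calc (J:ℝ) * Real.log 2 ≤ Real.log (Real.log n) + Real.log 2 := h8
      _ = Real.log (Real.log n) + 1 * Real.log 2 := by ring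
  have hTJ : (T:ℝ) < 2^(J+1) := by
    have := Nat.lt_pow_succ_log_self one_lt_two T
    exact_mod_cast this
  have hJT : J ≤ T := Nat.log_le_self 2 T
  -- membership map
  have hmaps : ∀ p ∈ S, Nat.log 2 p ∈ Finset.Icc m T := by
    intro p hp
    rw [hSdef, Finset.mem_filter] at hp
    obtain ⟨hpf, hpL⟩ := hp
    push_neg at hpL
    have hple : p ≤ n := Nat.le_of_mem_primeFactors hpf
    have hplow : ⌊L⌋₊ + 1 ≤ p := by
      have : ⌊L⌋₊ < p := (Nat.floor_lt hL0).2 hpL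
      omega
    exact Finset.mem_Icc.2 ⟨Nat.log_mono_right hplow, Nat.log_mono_right hple⟩
  have hfib : ∑ p ∈ S, (1/(p:ℝ)) =
      ∑ j ∈ Finset.Icc m T, ∑ p ∈ S.filter (fun p => Nat.log 2 p = j), (1/(p:ℝ)) :=
    (Finset.sum_fiberwise_of_maps_to hmaps _).symm
  -- per-fiber bound
  have hbound : ∀ j ∈ Finset.Icc m T,
      ∑ p ∈ S.filter (fun p => Nat.log 2 p = j), (1/(p:ℝ)) ≤
        (if j ≤ J then 4/(m:ℝ) else (T:ℝ)/m * (1/2)^j) := by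
    intro j hj
    obtain ⟨hmj, hjT⟩ := Finset.mem_Icc.1 hj
    set F := S.filter (fun p => Nat.log 2 p = j) with hF
    have hjpos : 0 < j := lt_of_lt_of_le hm1 hmj
    have hjr : (0:ℝ) < (j:ℝ) := by exact_mod_cast hjpos
    have hmjr : (m:ℝ) ≤ (j:ℝ) := by exact_mod_cast hmj
    have hFsub : F ⊆ n.primeFactors :=
      subset_trans (Finset.filter_subset _ _) (Finset.filter_subset _ _)
    have hFprime : ∀ p ∈ F, p.Prime := fun p hp =>
      Nat.prime_of_mem_primeFactors (hFsub hp)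
    have h2j : ∀ p ∈ F, 2^j ≤ p := by
      intro p hp
      have hj' : Nat.log 2 p = j := by
        have := (Finset.mem_filter.1 hp).2
        simpa using this
      have hp0 : p ≠ 0 := (hFprime p hp).pos.ne'
      calc 2^j = 2^(Nat.log 2 p) := by rw [hj']
        _ ≤ p := Nat.pow_log_le_self 2 hp0
    have hlt : ∀ p ∈ F, p < 2^(j+1) := by
      intro p hp
      have hj' : Nat.log 2 p = j := by
        have := (Finset.mem_filter.1 hp).2
        simpa using this
      have h := Nat.lt_pow_succ_log_self one_lt_two p
      rwa [hj'] at h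
    set c := F.card with hc
    have hpowc : 2^(j*c) ≤ ∏ p ∈ F, p := by
      rw [pow_mul]
      exact Finset.pow_card_le_prod F _ _ h2j
    have hprodn : ∏ p ∈ F, p ≤ n := by
      apply Nat.le_of_dvd hn
      exact dvd_trans
        (Finset.prod_dvd_prod_of_subset F n.primeFactors _ hFsub)
        (Nat.prod_primeFactors_dvd n)
    have hB : j * c ≤ T :=
      (Nat.le_log_iff_pow_le one_lt_two hn.ne').2 (le_trans hpowc hprodn)
    have hprodprim : ∏ p ∈ F, p ∣ primorial (2^(j+1)) := by
      apply Finset.prod_dvd_prod_of_subset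
      intro p hp
      rw [Finset.mem_filter, Finset.mem_range]
      exact ⟨by have := hlt p hp; omega, hFprime p hp⟩
    have hA' : ∏ p ∈ F, p ≤ 4^(2^(j+1)) :=
      le_trans (Nat.le_of_dvd (primorial_pos _) hprodprim) (primorial_le_4_pow _)
    have hA : j * c ≤ 2^(j+2) := by
      have h1 : (2:ℕ)^(j*c) ≤ 2^(2^(j+2)) := by
        calc (2:ℕ)^(j*c) ≤ 4^(2^(j+1)) := le_trans hpowc hA'
          _ = 2^(2^(j+2)) := by
            rw [show (4:ℕ) = 2^2 from rfl, ← pow_mul]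
            congr 1
            rw [pow_succ]
            ring
      exact (Nat.pow_le_pow_iff_right one_lt_two).1 h1
    have hsumF : ∑ p ∈ F, (1/(p:ℝ)) ≤ (c:ℝ) * (1/2)^j := by
      have hterm : ∀ p ∈ F, (1/(p:ℝ)) ≤ ((1:ℝ)/2)^j := by
        intro p hp
        have h1 : (2:ℝ)^j ≤ (p:ℝ) := by exact_mod_cast h2j p hp
        have h2 : (0:ℝ) < 2^j := by positivity
        have h3 : ((1:ℝ)/2)^j = 1/(2:ℝ)^j := by
          rw [div_pow, one_pow]
        rw [h3]
        exact one_div_le_one_div_of_le h2 h1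
      calc ∑ p ∈ F, (1/(p:ℝ)) ≤ F.card • ((1/2:ℝ))^j :=
            Finset.sum_le_card_nsmul F _ _ hterm
        _ = (c:ℝ) * (1/2)^j := by rw [nsmul_eq_mul]
    have hpow2 : ((1:ℝ)/2)^j = ((2:ℝ)^j)⁻¹ := by
      rw [div_pow, one_pow, one_div]
    have h2jr : (0:ℝ) < (2:ℝ)^j := by positivity
    by_cases hcase : j ≤ J
    · rw [if_pos hcase]
      have hcr : (c:ℝ) ≤ 2^(j+2)/(j:ℝ) := by
        rw [le_div_iff₀ hjr]
        have h1 : ((j*c:ℕ):ℝ) ≤ ((2^(j+2):ℕ):ℝ) := by exact_mod_cast hA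
        push_cast at h1
        linarith
      calc ∑ p ∈ F, (1/(p:ℝ)) ≤ (c:ℝ)*(1/2)^j := hsumF
        _ ≤ (2^(j+2)/(j:ℝ)) * (1/2)^j := by
            apply mul_le_mul_of_nonneg_right hcr (by positivity)
        _ = 4/(j:ℝ) := by
            rw [hpow2, pow_add]
            field_simp
            ring
        _ ≤ 4/(m:ℝ) := by
            apply div_le_div_of_nonneg_left (by norm_num) hmr hmjr
    · rw [if_neg hcase]
      have hcr : (c:ℝ) ≤ (T:ℝ)/(j:ℝ) := by
        rw [le_div_iff₀ hjr]
        have h1 : ((j*c:ℕ):ℝ) ≤ ((T:ℕ):ℝ) := by exact_mod_cast hB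
        push_cast at h1
        linarith
      calc ∑ p ∈ F, (1/(p:ℝ)) ≤ (c:ℝ)*(1/2)^j := hsumF
        _ ≤ ((T:ℝ)/(j:ℝ)) * (1/2)^j := by
            apply mul_le_mul_of_nonneg_right hcr (by positivity)
        _ ≤ ((T:ℝ)/(m:ℝ)) * (1/2)^j := by
            apply mul_le_mul_of_nonneg_right _ (by positivity)
            apply div_le_div_of_nonneg_left hTpos.le hmr hmjr
  -- total
  rw [hfib]
  have htot := Finset.sum_le_sum hbound
  refine le_trans htot ?_
  rw [Finset.sum_ite]
  -- part 1
  have hpart1 : ∑ _j ∈ (Finset.Icc m T).filter (fun j => j ≤ J), (4/(m:ℝ))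
      ≤ ((J:ℝ)+1) * (4/m) := by
    rw [Finset.sum_const, nsmul_eq_mul]
    apply mul_le_mul_of_nonneg_right _ (by positivity)
    have hsub : (Finset.Icc m T).filter (fun j => j ≤ J) ⊆ Finset.Icc 0 J := by
      intro j hj
      rw [Finset.mem_filter] at hj
      exact Finset.mem_Icc.2 ⟨Nat.zero_le _, hj.2⟩
    have := Finset.card_le_card hsub
    rw [Nat.card_Icc] at this
    have h2 : ((Finset.Icc m T).filter (fun j => j ≤ J)).card ≤ J + 1 := by omega
    exact_mod_cast h2
  -- part 2
  have hpart2 : ∑ j ∈ (Finset.Icc m T).filter (fun j => ¬ j ≤ J), ((T:ℝ)/m * (1/2)^j)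
      ≤ 2/(m:ℝ) := by
    rw [← Finset.mul_sum]
    have hsub : (Finset.Icc m T).filter (fun j => ¬ j ≤ J) ⊆ Finset.Ico (J+1) (T+1) := by
      intro j hj
      rw [Finset.mem_filter, Finset.mem_Icc] at hj
      rw [Finset.mem_Ico]
      omega
    have hgeo : ∑ j ∈ (Finset.Icc m T).filter (fun j => ¬ j ≤ J), ((1:ℝ)/2)^j
        ≤ ((1:ℝ)/2)^J := by
      calc ∑ j ∈ (Finset.Icc m T).filter (fun j => ¬ j ≤ J), ((1:ℝ)/2)^j
          ≤ ∑ j ∈ Finset.Ico (J+1) (T+1), ((1:ℝ)/2)^j :=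
            Finset.sum_le_sum_of_subset_of_nonneg hsub (by intros; positivity)
        _ ≤ ((1:ℝ)/2)^(J+1) / (1 - 1/2) :=
            geom_sum_Ico_le_of_lt_one (by norm_num) (by norm_num)
        _ = ((1:ℝ)/2)^J := by
            rw [pow_succ]
            norm_num
    calc (T:ℝ)/m * ∑ j ∈ (Finset.Icc m T).filter (fun j => ¬ j ≤ J), ((1:ℝ)/2)^j
        ≤ (T:ℝ)/m * ((1:ℝ)/2)^J := by
          apply mul_le_mul_of_nonneg_left hgeo (by positivity)
      _ ≤ 2/(m:ℝ) := by
          have h2J : (0:ℝ) < (2:ℝ)^J := by positivity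
          have hTJ' : (T:ℝ) * ((1:ℝ)/2)^J ≤ 2 := by
            rw [div_pow, one_pow, mul_one_div]
            rw [div_le_iff₀ h2J]
            have h5 : (2:ℝ)^(J+1) = 2 * 2^J := by rw [pow_succ]; ring
            nlinarith [hTJ]
          calc (T:ℝ)/m * ((1:ℝ)/2)^J = (T:ℝ) * ((1:ℝ)/2)^J / m := by ring
            _ ≤ 2/(m:ℝ) := by gcongr
  -- combine
  have hJx : (J:ℝ) ≤ x + 1 := hJreal
  calc ∑ _j ∈ (Finset.Icc m T).filter (fun j => j ≤ J), (4/(m:ℝ))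
        + ∑ j ∈ (Finset.Icc m T).filter (fun j => ¬ j ≤ J), ((T:ℝ)/m * (1/2)^j)
      ≤ ((J:ℝ)+1) * (4/m) + 2/(m:ℝ) := add_le_add hpart1 hpart2
    _ ≤ ((x+1)+1) * (4/m) + 2/(m:ℝ) := by
        apply add_le_add_left
        apply mul_le_mul_of_nonneg_right (by linarith) (by positivity)
    _ = (4*x + 10) / m := by ring
    _ ≤ (8*x) / m := by gcongr <;> linarith
    _ ≤ (8*x) / (α*x/2) := by
        apply div_le_div_of_nonneg_left (by positivity) (by positivity) hm_low
    _ = 16/α := by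
        field_simp
        ring

/-- Lemma 3 of the paper. For `0 < α < 1` there is `C(α) > 0` such
that for every positive integer `n`,
`n/φ(n) ≤ C(α) ∏_{p ∣ n, p ≤ (ln n)^α} (1 + 1/p)`. -/
theorem romanoff_L3 (α : ℝ) (hα0 : 0 < α) (hα1 : α < 1) :
    ∃ C : ℝ, 0 < C ∧
      ∀ n : ℕ, 0 < n →
        (n : ℝ) / (n.totient : ℝ) ≤
          C * ∏ p ∈ n.primeFactors.filter (fun p : ℕ => (p : ℝ) ≤ (Real.log n) ^ α),
            (1 + 1 / (p : ℝ)) := by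
  classical
  set c : ℝ := (2/α + 3) * Real.log 2 with hcdef
  have hlog2pos : (0:ℝ) < Real.log 2 := Real.log_pos (by norm_num)
  have hcpos : 0 < c := by positivity
  refine ⟨Real.exp (Real.exp c) + Real.exp (1 + 16/α), by positivity, ?_⟩
  intro n hn
  set L : ℝ := (Real.log n) ^ α with hLdef
  set Pf := n.primeFactors with hPf
  have hp2 : ∀ p ∈ Pf, (2:ℝ) ≤ (p:ℝ) := fun p hp => by
    exact_mod_cast (Nat.prime_of_mem_primeFactors hp).two_le
  have hprod1 : (1:ℝ) ≤ ∏ p ∈ Pf.filter (fun p : ℕ => (p:ℝ) ≤ L), (1 + 1/(p:ℝ)) := by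
    have h := Finset.prod_le_prod (s := Pf.filter (fun p : ℕ => (p:ℝ) ≤ L))
      (f := fun _ => (1:ℝ)) (g := fun p : ℕ => 1 + 1/(p:ℝ)) ?_ ?_
    · simpa using h
    · intro i _; norm_num
    · intro i _
      have : (0:ℝ) ≤ 1/(i:ℝ) := by positivity
      linarith
  have hφpos : 0 < n.totient := Nat.totient_pos.2 hn
  by_cases hbig : c ≤ Real.log (Real.log n)
  · -- large n
    have hid : (n.totient : ℝ) = n * ∏ p ∈ Pf, (1 - (p:ℝ)⁻¹) := by
      have hQ := Nat.totient_eq_mul_prod_factors n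
      have h2 := congrArg (fun q : ℚ => (q:ℝ)) hQ
      push_cast at h2
      exact h2
    have key : (n:ℝ)/(n.totient:ℝ) =
        ∏ p ∈ Pf, ((1 + 1/(p:ℝ)) * (1 + 1/((p:ℝ)^2 - 1))) := by
      rw [hid]
      have hne : (n:ℝ) ≠ 0 := by positivity
      rw [div_mul_eq_div_div, div_self hne, one_div, ← Finset.prod_inv_distrib]
      apply Finset.prod_congr rfl
      intro p hp
      have h2 := hp2 p hp
      have hp0 : (p:ℝ) ≠ 0 := by linarith
      have hp1 : (p:ℝ) - 1 ≠ 0 := by intro h; nlinarith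
      have hp1' : (p:ℝ) + 1 ≠ 0 := by intro h; nlinarith
      have hsq : (p:ℝ)^2 - 1 ≠ 0 := by intro h; nlinarith
      field_simp
      ring
    rw [key, Finset.prod_mul_distrib]
    have hsecond : ∏ p ∈ Pf, (1 + 1/((p:ℝ)^2-1)) ≤ Real.exp 1 := by
      have hstep : ∏ p ∈ Pf, (1 + 1/((p:ℝ)^2-1)) ≤
          ∏ p ∈ Pf, Real.exp (1/((p:ℝ)^2-1)) := by
        apply Finset.prod_le_prod
        · intro p hp
          have h2 := hp2 p hp
          have : (0:ℝ) < (p:ℝ)^2 - 1 := by nlinarith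
          positivity
        · intro p hp
          have := Real.add_one_le_exp (1/((p:ℝ)^2-1))
          linarith
      refine le_trans hstep ?_
      rw [← Real.exp_sum]
      apply Real.exp_le_exp.2
      have hsum : ∑ p ∈ Pf, 1/((p:ℝ)^2-1) ≤ ∑ p ∈ Pf, (1/((p:ℝ)-1) - 1/p) := by
        apply Finset.sum_le_sum
        intro p hp
        have h2 := hp2 p hp
        have hpos : (0:ℝ) < ((p:ℝ)-1) * p := by nlinarith
        have h0 : (p:ℝ) ≠ 0 := by linarith
        have h1 : (p:ℝ) - 1 ≠ 0 := by linarith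
        have heq : 1/((p:ℝ)-1) - 1/p = 1/(((p:ℝ)-1) * p) := by
          rw [div_sub_div _ _ h1 h0, show (1:ℝ)*p - ((p:ℝ)-1)*1 = 1 by ring]
        rw [heq]
        apply one_div_le_one_div_of_le hpos
        nlinarith
      refine le_trans hsum ?_
      apply sum_sub_le_one
      intro k hk
      exact (Nat.prime_of_mem_primeFactors hk).two_le
    -- split first product
    have hsplit : ∏ p ∈ Pf, (1 + 1/(p:ℝ)) =
        (∏ p ∈ Pf.filter (fun p : ℕ => (p:ℝ) ≤ L), (1 + 1/(p:ℝ))) *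
        (∏ p ∈ Pf.filter (fun p : ℕ => ¬ ((p:ℝ) ≤ L)), (1 + 1/(p:ℝ))) :=
      (Finset.prod_filter_mul_prod_filter_not Pf _ _).symm
    have hlarge : ∏ p ∈ Pf.filter (fun p : ℕ => ¬ ((p:ℝ) ≤ L)), (1 + 1/(p:ℝ))
        ≤ Real.exp (16/α) := by
      have hstep : ∏ p ∈ Pf.filter (fun p : ℕ => ¬ ((p:ℝ) ≤ L)), (1 + 1/(p:ℝ)) ≤
          ∏ p ∈ Pf.filter (fun p : ℕ => ¬ ((p:ℝ) ≤ L)), Real.exp (1/(p:ℝ)) := by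
        apply Finset.prod_le_prod
        · intro p hp
          have h2 := hp2 p (Finset.mem_of_mem_filter p hp)
          positivity
        · intro p hp
          have := Real.add_one_le_exp (1/(p:ℝ))
          linarith
      refine le_trans hstep ?_
      rw [← Real.exp_sum]
      apply Real.exp_le_exp.2
      exact sum_inv_large_le α hα0 n hn hbig
    have hsmallpos : (0:ℝ) < ∏ p ∈ Pf.filter (fun p : ℕ => (p:ℝ) ≤ L), (1 + 1/(p:ℝ)) := by
      linarith
    have hlargenn : (0:ℝ) ≤ ∏ p ∈ Pf.filter (fun p : ℕ => ¬ ((p:ℝ) ≤ L)), (1 + 1/(p:ℝ)) := by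
      apply Finset.prod_nonneg
      intro p hp
      have h2 := hp2 p (Finset.mem_of_mem_filter p hp)
      positivity
    rw [hsplit]
    calc (∏ p ∈ Pf.filter (fun p : ℕ => (p:ℝ) ≤ L), (1 + 1/(p:ℝ))) *
          (∏ p ∈ Pf.filter (fun p : ℕ => ¬ ((p:ℝ) ≤ L)), (1 + 1/(p:ℝ))) *
          (∏ p ∈ Pf, (1 + 1/((p:ℝ)^2-1)))
        ≤ (∏ p ∈ Pf.filter (fun p : ℕ => (p:ℝ) ≤ L), (1 + 1/(p:ℝ))) *
          Real.exp (16/α) * Real.exp 1 := by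
          apply mul_le_mul
          · exact mul_le_mul_of_nonneg_left hlarge hsmallpos.le
          · exact hsecond
          · apply Finset.prod_nonneg
            intro p hp
            have h2 := hp2 p hp
            have : (0:ℝ) < (p:ℝ)^2 - 1 := by nlinarith
            positivity
          · positivity
      _ = Real.exp (1 + 16/α) * ∏ p ∈ Pf.filter (fun p : ℕ => (p:ℝ) ≤ L), (1 + 1/(p:ℝ)) := by
          rw [mul_assoc, ← Real.exp_add, add_comm (16/α) 1, mul_comm]
      _ ≤ (Real.exp (Real.exp c) + Real.exp (1 + 16/α)) *
            ∏ p ∈ Pf.filter (fun p : ℕ => (p:ℝ) ≤ L), (1 + 1/(p:ℝ)) := by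
          apply mul_le_mul_of_nonneg_right _ hsmallpos.le
          have : (0:ℝ) < Real.exp (Real.exp c) := Real.exp_pos _
          linarith
  · -- small n
    push_neg at hbig
    have hnle : (n:ℝ) ≤ Real.exp (Real.exp c) := by
      by_cases h1 : n = 1
      · rw [h1]
        have h0 : (0:ℝ) ≤ Real.exp c := (Real.exp_pos c).le
        calc ((1:ℕ):ℝ) = Real.exp 0 := by rw [Real.exp_zero]; norm_num
          _ ≤ Real.exp (Real.exp c) := Real.exp_le_exp.2 h0
      · have hn2 : 2 ≤ n := by omega
        have h1n : (1:ℝ) < (n:ℝ) := by exact_mod_cast hn2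
        have hlogn : 0 < Real.log n := Real.log_pos h1n
        have h2 : Real.log n < Real.exp c := by
          calc Real.log n = Real.exp (Real.log (Real.log n)) := (Real.exp_log hlogn).symm
            _ < Real.exp c := Real.exp_lt_exp.2 hbig
        have h3 : (n:ℝ) = Real.exp (Real.log n) := (Real.exp_log (by linarith)).symm
        rw [h3]
        exact Real.exp_le_exp.2 h2.le
    have hdiv : (n:ℝ)/(n.totient:ℝ) ≤ (n:ℝ) := by
      apply div_le_self (by positivity)
      exact_mod_cast hφpos
    calc (n:ℝ)/(n.totient:ℝ) ≤ (n:ℝ) := hdiv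
      _ ≤ Real.exp (Real.exp c) := hnle
      _ ≤ (Real.exp (Real.exp c) + Real.exp (1+16/α)) * 1 := by
          have := Real.exp_pos (1+16/α); linarith
      _ ≤ (Real.exp (Real.exp c) + Real.exp (1+16/α)) *
            ∏ p ∈ Pf.filter (fun p : ℕ => (p:ℝ) ≤ L), (1 + 1/(p:ℝ)) := by
          apply mul_le_mul_of_nonneg_left hprod1 (by positivity)
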